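/- Let F be a Borel probability measure on [x̲, x̄] with no atom at x̄ and with x̄ in its support, and let k > 0. For ε ∈ (0, x̄ − x̲) define G(ε) = ∫ (min{x, x̄} − min{x, x̄ − ε} − k·1_{[x̄−ε, x̄)}(x)) dF(x). Then G(ε) ≤ (ε − k)·(1 − F(x̄ − ε)) for all ε, and there exists ε > 0 with G(ε) < 0. -/

import Mathlib

open MeasureTheory

theorem stmt17 (xlow xbar k : ℝ) (hx : xlow < xbar) (hk : 0 < k)
    (μ : Measure ℝ) [IsProbabilityMeasure μ]
    (hconc : μ (Set.Icc xlow xbar) = 1)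
    (hatom : μ {xbar} = 0)
    (hsupp : ∀ ε > 0, 0 < μ (Set.Ioc (xbar - ε) xbar))
    (G : ℝ → ℝ)
    (hG : ∀ ε ∈ Set.Ioo 0 (xbar - xlow),
      G ε = ∫ x, (min x xbar - min x (xbar - ε)
        - k * Set.indicator (Set.Ico (xbar - ε) xbar) (fun _ => (1:ℝ)) x) ∂μ) :
    (∀ ε ∈ Set.Ioo 0 (xbar - xlow),
      G ε ≤ (ε - k) * (μ (Set.Icc (xbar - ε) xbar)).toReal) ∧
    ∃ ε ∈ Set.Ioo 0 (xbar - xlow), G ε < 0 := by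
  have key : ∀ ε ∈ Set.Ioo 0 (xbar - xlow),
      G ε ≤ (ε - k) * (μ (Set.Icc (xbar - ε) xbar)).toReal := by
    intro ε hε
    obtain ⟨hε0, hε1⟩ := hε
    rw [hG ε ⟨hε0, hε1⟩]
    have hle : xbar - ε ≤ xbar := by linarith
    -- integrability of the integrand
    have hf1 : Integrable (fun x => min x xbar - min x (xbar - ε)) μ := by
      apply (integrable_const ε).mono'
      · exact ((continuous_id.min continuous_const).sub
          (continuous_id.min continuous_const)).aestronglyMeasurable
      · filter_upwards with x
        rw [Real.norm_eq_abs, abs_le]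
        constructor
        · have : min x (xbar - ε) ≤ min x xbar := min_le_min le_rfl hle
          linarith
        · rcases le_total x (xbar - ε) with h | h
          · rw [min_eq_left (h.trans hle), min_eq_left h]; linarith
          · have : min x xbar ≤ xbar := min_le_right _ _
            rw [min_eq_right h]; linarith
    have hf2 : Integrable (fun x =>
        k * Set.indicator (Set.Ico (xbar - ε) xbar) (fun _ => (1:ℝ)) x) μ :=
      ((integrable_const (1:ℝ)).indicator measurableSet_Ico).const_mul k
    have hg : Integrable (fun x =>
        Set.indicator (Set.Icc (xbar - ε) xbar) (fun _ => ε - k) x) μ :=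
      (integrable_const (ε - k)).indicator measurableSet_Icc
    have hmono : ∀ᵐ x ∂μ, (min x xbar - min x (xbar - ε)
        - k * Set.indicator (Set.Ico (xbar - ε) xbar) (fun _ => (1:ℝ)) x)
        ≤ Set.indicator (Set.Icc (xbar - ε) xbar) (fun _ => ε - k) x := by
      have hcompl : μ ((Set.Icc xlow xbar \ {xbar})ᶜ) = 0 := by
        have h1 : μ (Set.Icc xlow xbar)ᶜ = 0 := by
          have := measure_compl (measurableSet_Icc (a := xlow) (b := xbar)) (measure_ne_top μ _)
          rw [hconc] at this
          simp [this]
        have : μ ((Set.Icc xlow xbar)ᶜ ∪ {xbar}) = 0 :=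
          measure_union_null h1 hatom
        refine measure_mono_null ?_ this
        intro x hx'
        simp only [Set.mem_compl_iff, Set.mem_diff, not_and, not_not] at hx'
        by_cases h : x ∈ Set.Icc xlow xbar
        · exact Or.inr (hx' h)
        · exact Or.inl h
      rw [ae_iff]
      refine measure_mono_null ?_ hcompl
      intro x hx'
      simp only [Set.mem_setOf_eq, not_le] at hx'
      simp only [Set.mem_compl_iff, Set.mem_diff, not_and, not_not]
      by_contra hmem
      push_neg at hmem
      obtain ⟨hxIcc, hxne⟩ := hmem
      have hxlt : x < xbar := lt_of_le_of_ne hxIcc.2 hxne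
      rcases lt_or_ge x (xbar - ε) with h | h
      · have hind1 : Set.indicator (Set.Ico (xbar - ε) xbar) (fun _ => (1:ℝ)) x = 0 := by
          apply Set.indicator_of_notMem
          simp [Set.mem_Ico]; intro h'; linarith
        have hind2 : Set.indicator (Set.Icc (xbar - ε) xbar) (fun _ => ε - k) x = 0 := by
          apply Set.indicator_of_notMem
          simp [Set.mem_Icc]; intro h'; linarith
        rw [hind1, hind2, min_eq_left (le_of_lt (h.trans_le hle)), min_eq_left h.le] at hx'
        simp at hx'
      · have hind1 : Set.indicator (Set.Ico (xbar - ε) xbar) (fun _ => (1:ℝ)) x = 1 :=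
          Set.indicator_of_mem (Set.mem_Ico.mpr ⟨h, hxlt⟩) _
        have hind2 : Set.indicator (Set.Icc (xbar - ε) xbar) (fun _ => ε - k) x = ε - k :=
          Set.indicator_of_mem (Set.mem_Icc.mpr ⟨h, hxlt.le⟩) _
        rw [hind1, hind2, min_eq_left hxlt.le, min_eq_right h] at hx'
        linarith
    calc ∫ x, (min x xbar - min x (xbar - ε)
        - k * Set.indicator (Set.Ico (xbar - ε) xbar) (fun _ => (1:ℝ)) x) ∂μ
        ≤ ∫ x, Set.indicator (Set.Icc (xbar - ε) xbar) (fun _ => ε - k) x ∂μ :=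
          integral_mono_ae (hf1.sub hf2) hg hmono
      _ = (ε - k) * (μ (Set.Icc (xbar - ε) xbar)).toReal := by
          rw [integral_indicator_const (ε - k) measurableSet_Icc, smul_eq_mul, mul_comm]; rfl
  refine ⟨key, ?_⟩
  set ε := min k (xbar - xlow) / 2 with hεdef
  have hεpos : 0 < ε := by
    apply div_pos (lt_min hk (by linarith)) two_pos
  have hεlt : ε < xbar - xlow := by
    have : min k (xbar - xlow) ≤ xbar - xlow := min_le_right _ _
    have h2 : 0 < xbar - xlow := by linarith
    have hm := min_le_right k (xbar - xlow)
    rw [hεdef]; linarith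
  have hεk : ε < k := by
    have : min k (xbar - xlow) ≤ k := min_le_left _ _
    calc ε ≤ k / 2 := by have := min_le_left k (xbar - xlow); rw [hεdef]; linarith
      _ < k := by linarith
  refine ⟨ε, ⟨hεpos, hεlt⟩, ?_⟩
  have hpos : 0 < μ (Set.Icc (xbar - ε) xbar) :=
    lt_of_lt_of_le (hsupp ε hεpos) (measure_mono Set.Ioc_subset_Icc_self)
  have hne : μ (Set.Icc (xbar - ε) xbar) ≠ ⊤ := measure_ne_top μ _
  have htoReal : 0 < (μ (Set.Icc (xbar - ε) xbar)).toReal :=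
    ENNReal.toReal_pos hpos.ne' hne
  have := key ε ⟨hεpos, hεlt⟩
  have hneg : (ε - k) * (μ (Set.Icc (xbar - ε) xbar)).toReal < 0 :=
    mul_neg_of_neg_of_pos (by linarith) htoReal
  linarith
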